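/- For real x with x > 1, the real part of K_1^+(x) := ∫₀^π [1 − ((x − e^{iφ})/(x − e^{−iφ}))] sin φ dφ equals (1/(2x³))[2(x + x³) − (x² − 1)² ln|(x+1)/(x−1)|]. -/

import Mathlib

open Complex

/-- `K_m^+(x)`, Fourier-mode damping coefficient of the collision integral. -/
noncomputable def Kp (m : ℤ) (x : ℝ) : ℂ :=
  ∫ φ in (0:ℝ)..Real.pi,
    (1 - (((x : ℂ) - Complex.exp (Complex.I * φ)) /
        ((x : ℂ) - Complex.exp (-(Complex.I * φ)))) ^ m) * (Real.sin φ : ℂ)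

/-- `K_m^-(x)`, Fourier-mode damping coefficient of the collision integral. -/
noncomputable def Km (m : ℤ) (x : ℝ) : ℂ :=
  ∫ φ in (0:ℝ)..Real.pi,
    (1 - (((x : ℂ) + Complex.exp (Complex.I * φ)) /
        ((x : ℂ) + Complex.exp (-(Complex.I * φ)))) ^ m) * (Real.sin φ : ℂ)

lemma exp_I_phi (φ : ℝ) :
    Complex.exp (Complex.I * φ) = (Real.cos φ : ℂ) + (Real.sin φ : ℂ) * Complex.I := by
  rw [mul_comm, Complex.exp_mul_I, ← Complex.ofReal_cos, ← Complex.ofReal_sin]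

lemma exp_neg_I_phi (φ : ℝ) :
    Complex.exp (-(Complex.I * φ)) = (Real.cos φ : ℂ) - (Real.sin φ : ℂ) * Complex.I := by
  have : -(Complex.I * (φ:ℂ)) = ((-φ : ℝ) : ℂ) * Complex.I := by push_cast; ring
  rw [this, Complex.exp_mul_I, ← Complex.ofReal_cos, ← Complex.ofReal_sin,
    Real.cos_neg, Real.sin_neg]
  push_cast; ring

lemma re_integrand (x : ℝ) (hx : 1 < x) (φ : ℝ) :
    ((1 - (((x : ℂ) - Complex.exp (Complex.I * φ)) /
        ((x : ℂ) - Complex.exp (-(Complex.I * φ)))) ^ (1:ℤ)) * (Real.sin φ : ℂ)).re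
      = 2 * (Real.sin φ)^3 / (x^2 + 1 - 2*x*Real.cos φ) := by
  set c := Real.cos φ with hc
  set s := Real.sin φ with hs
  have hcs : c^2 + s^2 = 1 := by rw [add_comm]; exact Real.sin_sq_add_cos_sq φ
  have hN : (x - c)^2 + s^2 = x^2 + 1 - 2*x*c := by nlinarith [hcs]
  have hNpos : 0 < x^2 + 1 - 2*x*c := by
    have h1 : c ≤ 1 := Real.cos_le_one φ
    nlinarith [sq_nonneg (x - 1)]
  rw [zpow_one, exp_I_phi, exp_neg_I_phi, ← hc, ← hs]
  have hd : Complex.normSq ((x:ℂ) - ((c:ℂ) - (s:ℂ) * Complex.I)) = (x-c)^2 + s^2 := by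
    simp [Complex.normSq_apply]; ring
  simp only [Complex.mul_re, Complex.ofReal_re, Complex.ofReal_im, mul_zero, sub_zero,
    Complex.sub_re, Complex.sub_im, Complex.one_re, Complex.one_im, Complex.div_re,
    Complex.div_im, hd, hN]
  simp [Complex.normSq_apply]
  have hD : x ^ 2 + 1 - x * c * 2 ≠ 0 := by nlinarith
  field_simp
  ring_nf
  linear_combination (-s) * hcs
lemma hD_pos (x : ℝ) (hx : 1 < x) (φ : ℝ) : 0 < x^2 + 1 - 2*x*Real.cos φ := by
  have h1 : Real.cos φ ≤ 1 := Real.cos_le_one φ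
  nlinarith [sq_nonneg (x - 1)]

lemma hdne (x : ℝ) (hx : 1 < x) (φ : ℝ) :
    ((x:ℂ) - Complex.exp (-(Complex.I * φ))) ≠ 0 := by
  intro h
  have hxe : (x:ℂ) = Complex.exp (-(Complex.I*φ)) := by linear_combination h
  have h1 : ‖(x:ℂ)‖ = 1 := by
    rw [hxe, Complex.norm_exp]; simp
  rw [Complex.norm_real, Real.norm_eq_abs, abs_of_pos (by linarith)] at h1
  linarith

lemma integral_g (x : ℝ) (hx : 1 < x) :
    (∫ φ in (0:ℝ)..Real.pi, 2*(Real.sin φ)^3/(x^2+1-2*x*Real.cos φ))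
      = (x^2+1)/x^2 + (x^2-1)^2/(4*x^3) * (2*Real.log (x-1) - 2*Real.log (x+1)) := by
  have hx0 : (0:ℝ) < x := by linarith
  set k : ℝ := (x^2-1)^2/(4*x^3) with hk
  set F : ℝ → ℝ := fun φ =>
    -((Real.cos φ)^2/(2*x) + (x^2+1)*Real.cos φ/(2*x^2)
        + k * Real.log (x^2+1-2*x*Real.cos φ)) with hF
  have hderiv : ∀ φ : ℝ, HasDerivAt F (2*(Real.sin φ)^3/(x^2+1-2*x*Real.cos φ)) φ := by
    intro φ
    have hu : 0 < x^2+1-2*x*Real.cos φ := hD_pos x hx φ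
    have hcos : HasDerivAt Real.cos (-Real.sin φ) φ := Real.hasDerivAt_cos φ
    have h1 : HasDerivAt (fun φ => (Real.cos φ)^2/(2*x))
        ((2*Real.cos φ*(-Real.sin φ))/(2*x)) φ := by
      have := (hcos.pow 2).div_const (2*x)
      exact this.congr_deriv (by ring)
    have h2 : HasDerivAt (fun φ => (x^2+1)*Real.cos φ/(2*x^2))
        ((x^2+1)*(-Real.sin φ)/(2*x^2)) φ := by
      have := (hcos.const_mul (x^2+1)).div_const (2*x^2)
      convert this using 1
    have hin : HasDerivAt (fun φ => x^2+1-2*x*Real.cos φ) (2*x*Real.sin φ) φ := by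
      have := (hcos.const_mul (2*x)).const_sub (x^2+1)
      exact this.congr_deriv (by ring)
    have h3 : HasDerivAt (fun φ => k * Real.log (x^2+1-2*x*Real.cos φ))
        (k * ((x^2+1-2*x*Real.cos φ)⁻¹ * (2*x*Real.sin φ))) φ := by
      exact ((Real.hasDerivAt_log hu.ne').comp φ hin).const_mul k
    have := ((h1.add h2).add h3).neg
    refine this.congr_deriv (Eq.symm ?_)
    have hcs : (Real.cos φ)^2 + (Real.sin φ)^2 = 1 := by
      rw [add_comm]; exact Real.sin_sq_add_cos_sq φ
    field_simp [hk]
    have hk4 : 4*x^3*k = (x^2-1)^2 := by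
      rw [hk, mul_div_assoc']; exact mul_div_cancel_left₀ _ (by positivity)
    linear_combination (4*x^2*Real.sin φ) * hcs + Real.sin φ * hk4
  have hcont : Continuous fun φ : ℝ => 2*(Real.sin φ)^3/(x^2+1-2*x*Real.cos φ) := by
    apply Continuous.div (by fun_prop) (by fun_prop)
    exact fun φ => (hD_pos x hx φ).ne'
  rw [intervalIntegral.integral_eq_sub_of_hasDerivAt (fun φ _ => hderiv φ)
    (hcont.intervalIntegrable _ _)]
  have e1 : x^2+1-2*x*Real.cos Real.pi = (x+1)^2 := by rw [Real.cos_pi]; ring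
  have e2 : x^2+1-2*x*Real.cos 0 = (x-1)^2 := by rw [Real.cos_zero]; ring
  have m1 : Real.log (x^2+1-2*x*Real.cos Real.pi) = 2*Real.log (x+1) := by
    rw [e1, Real.log_pow]; push_cast; ring
  have m2 : Real.log (x^2+1-2*x*Real.cos 0) = 2*Real.log (x-1) := by
    rw [e2, Real.log_pow]; push_cast; ring
  simp only [hF, hk]
  rw [m1, m2, Real.cos_pi, Real.cos_zero]
  field_simp
  ring

theorem K_one_re (x : ℝ) (hx : 1 < x) :
    (Kp 1 x).re = (1 / (2 * x ^ 3)) *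
      (2 * (x + x ^ 3) - (x ^ 2 - 1) ^ 2 * Real.log |(x + 1) / (x - 1)|) := by
  have hx0 : (0:ℝ) < x := by linarith
  have hcont : Continuous fun φ : ℝ =>
      (1 - (((x : ℂ) - Complex.exp (Complex.I * φ)) /
        ((x : ℂ) - Complex.exp (-(Complex.I * φ)))) ^ (1:ℤ)) * (Real.sin φ : ℂ) := by
    simp only [zpow_one]
    apply Continuous.mul
    · apply Continuous.sub continuous_const
      exact Continuous.div (by fun_prop) (by fun_prop) (fun φ => hdne x hx φ)
    · fun_prop
  have hInt : IntervalIntegrable (fun φ : ℝ =>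
      (1 - (((x : ℂ) - Complex.exp (Complex.I * φ)) /
        ((x : ℂ) - Complex.exp (-(Complex.I * φ)))) ^ (1:ℤ)) * (Real.sin φ : ℂ))
      MeasureTheory.volume (0:ℝ) Real.pi := hcont.intervalIntegrable (0:ℝ) Real.pi
  have h1 : (Kp 1 x).re = ∫ φ in (0:ℝ)..Real.pi,
      ((1 - (((x : ℂ) - Complex.exp (Complex.I * φ)) /
        ((x : ℂ) - Complex.exp (-(Complex.I * φ)))) ^ (1:ℤ)) * (Real.sin φ : ℂ)).re := by
    rw [Kp]
    exact (Complex.reCLM.intervalIntegral_comp_comm hInt).symm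
  rw [h1, intervalIntegral.integral_congr (g := fun φ =>
      2*(Real.sin φ)^3/(x^2+1-2*x*Real.cos φ)) (fun φ _ => re_integrand x hx φ),
    integral_g x hx]
  have habs : |(x + 1) / (x - 1)| = (x+1)/(x-1) := by
    exact abs_of_pos (div_pos (by linarith) (by linarith))
  rw [habs, Real.log_div (ne_of_gt (by linarith)) (ne_of_gt (by linarith))]
  field_simp
  ring
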